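/- Let X be a Hilbert space, Ω ⊆ X, f_i : X → ℝ, and suppose the closed ball of radius L > 0 centered at 0 is contained in each U_i ⊆ X = X*. If x̄ ∈ Ω is a highly robust weakly efficient solution of (P_U), then for every L̄ ∈ (0, L), x̄ is an isolated efficient solution of the nominal problem with constant L̄: max_{i∈I} (f_i(x) − f_i(x̄)) ≥ L̄‖x − x̄‖ for all x ∈ Ω. -/

import Mathlib

/-- In a Hilbert space, if the closed ball of radius `L` is contained
in each uncertainty set and `x̄` is highly robust weakly efficient, then `x̄` is an
isolated efficient solution of the nominal problem with any constant `L̄ < L`. -/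
theorem isolated_of_highly_robust_ball
    {X : Type*} [NormedAddCommGroup X] [InnerProductSpace ℝ X] [CompleteSpace X]
    {p : ℕ} (Ω : Set X) (f : Fin p → X → ℝ) (U : Fin p → Set X)
    (L : ℝ) (hL : 0 < L) (hball : ∀ i, Metric.closedBall (0 : X) L ⊆ U i)
    (xb : X) (hxb : xb ∈ Ω)
    (hrob : ∀ u : Fin p → X, (∀ i, u i ∈ U i) →
      ¬ ∃ x ∈ Ω, ∀ i, f i x - (inner ℝ (u i) x : ℝ) < f i xb - (inner ℝ (u i) xb : ℝ)) :
    ∀ Lb : ℝ, 0 < Lb → Lb < L →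
      ∀ x ∈ Ω, ∃ i, Lb * ‖x - xb‖ ≤ f i x - f i xb := by
  intro Lb hLb hLbL x hx
  have hp : 0 < p := by
    by_contra hp
    push_neg at hp
    interval_cases p
    exact hrob (fun i => 0) (fun i => i.elim0) ⟨xb, hxb, fun i => i.elim0⟩
  by_cases hxe : x = xb
  · refine ⟨⟨0, hp⟩, ?_⟩
    simp [hxe]
  · have hnorm : 0 < ‖x - xb‖ := by
      rw [norm_pos_iff]; exact sub_ne_zero.mpr hxe
    set u : X := (Lb / ‖x - xb‖) • (x - xb) with hu
    have hmem : ∀ i : Fin p, u ∈ U i := by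
      intro i
      apply hball i
      simp only [Metric.mem_closedBall, dist_zero_right, hu, norm_smul, Real.norm_eq_abs,
        abs_of_pos (div_pos hLb hnorm)]
      rw [div_mul_cancel₀ _ hnorm.ne']
      exact hLbL.le
    have h := hrob (fun _ => u) hmem
    push_neg at h
    obtain ⟨i, hi⟩ := h x hx
    refine ⟨i, ?_⟩
    have hinner : (inner ℝ u (x - xb) : ℝ) = Lb * ‖x - xb‖ := by
      rw [hu, real_inner_smul_left, real_inner_self_eq_norm_sq]
      field_simp
    rw [inner_sub_right] at hinner
    linarith
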